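/- arXiv:math/0511676 — 5 statements merged into one kernel-verified Lean document; each statement's English description precedes it below -/
import Mathlib

section
/- Let V be a finite-dimensional real vector space, Q a V-parallel space, and v ∈ V. If γ : I → Q and δ : J → Q are motions in Q with the same constant velocity v, defined on intervals I, J ⊆ ℝ, and if γ(s) = δ(s) for some s ∈ I ∩ J, then γ(t) = δ(t) for all t ∈ I ∩ J. -/
open Set Filter Topology Pointwise

structure ParallelSpace (V : Type*) (Q : Type*)
    [NormedAddCommGroup V] [NormedSpace ℝ V] [TopologicalSpace Q] where
  ι : Type*
  chart : ι → Set Q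
  chart_open : ∀ α, IsOpen (chart α)
  chart_cover : ∀ q : Q, ∃ α, q ∈ chart α
  φ : ι → Q → V
  φ_cont : ∀ α, ContinuousOn (φ α) (chart α)
  φ_inj : ∀ α, Set.InjOn (φ α) (chart α)
  φ_open : ∀ α, ∀ U : Set Q, U ⊆ chart α → IsOpen U →
      ∃ W : Set V, IsOpen W ∧ φ α '' U = W ∩ φ α '' chart α
  transition : ∀ α β : ι, ∀ x ∈ chart α ∩ chart β,
      ∀ᶠ y in nhdsWithin x (chart α ∩ chart β), φ α y - φ β y = φ α x - φ β x

namespace ParallelSpace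

variable {V : Type*} {Q : Type*} [NormedAddCommGroup V] [NormedSpace ℝ V]
  [TopologicalSpace Q]

def LocallyConvex (P : ParallelSpace V Q) : Prop :=
  ∀ α, Convex ℝ (P.φ α '' P.chart α)

def Polyhedral (P : ParallelSpace V Q) : Prop :=
  ∀ α, ∃ (V' : Set V) (m : ℕ) (f : Fin m → V →ₗ[ℝ] ℝ),
    IsOpen V' ∧ Convex ℝ V' ∧
    P.φ α '' P.chart α = {v ∈ V' | ∀ j, 0 ≤ f j v}

def IsMotion (P : ParallelSpace V Q) (v : V) (I : Set ℝ) (γ : ℝ → Q) : Prop :=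
  I.OrdConnected ∧ ContinuousOn γ I ∧
    ∀ α, ∀ J : Set ℝ, J ⊆ I → J.OrdConnected → (∀ t ∈ J, γ t ∈ P.chart α) →
      ∀ s ∈ J, ∀ t ∈ J, P.φ α (γ t) = P.φ α (γ s) + (t - s) • v

def maxInterval (P : ParallelSpace V Q) (v : V) (s : ℝ) (p : Q) : Set ℝ :=
  ⋃₀ {I : Set ℝ | s ∈ I ∧ ∃ γ : ℝ → Q, P.IsMotion v I γ ∧ γ s = p}

def Dom (P : ParallelSpace V Q) : Set (V × Q) :=
  {x : V × Q | (1 : ℝ) ∈ P.maxInterval x.1 0 x.2}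

def DomAt (P : ParallelSpace V Q) (p : Q) : Set V :=
  {v : V | (v, p) ∈ P.Dom}

open Classical in
noncomputable def trans (P : ParallelSpace V Q) (p : Q) (v : V) : Q :=
  if h : ∃ γ : ℝ → Q, P.IsMotion v (Set.Icc 0 1) γ ∧ γ 0 = p then h.choose 1 else p

def entRel (P : ParallelSpace V Q) (V₀ : Set V) : Set (Q × Q) :=
  {x : Q × Q | ∃ α, x.1 ∈ P.chart α ∧ x.2 ∈ P.chart α ∧ P.φ α x.1 - P.φ α x.2 ∈ V₀}

def IsCompleteP (P : ParallelSpace V Q) : Prop :=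
  ∀ F : Filter Q, F.NeBot →
    (∀ V₀ ∈ nhds (0 : V), ∃ S ∈ F, ∀ p ∈ S, ∀ q ∈ S, (p, q) ∈ P.entRel V₀) →
    ∃ x : Q, F ≤ nhds x

def LocalHomeoAt (P : ParallelSpace V Q) (p : Q) (v : V) : Prop :=
  ∃ U₀ : Set V, IsOpen U₀ ∧ v ∈ U₀ ∧
    Set.InjOn (P.trans p) (U₀ ∩ P.DomAt p) ∧
    ContinuousOn (P.trans p) (U₀ ∩ P.DomAt p) ∧
    IsOpen (P.trans p '' (U₀ ∩ P.DomAt p)) ∧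
    ∀ W : Set V, IsOpen W → IsOpen (P.trans p '' (W ∩ U₀ ∩ P.DomAt p))

end ParallelSpace

/-- two motions in a `V`-parallel space with the same constant velocity `v`
which agree at some time `s` agree on the whole intersection of their domains. -/
theorem motion_unique {V : Type*} [NormedAddCommGroup V] [NormedSpace ℝ V]
    [FiniteDimensional ℝ V] {Q : Type*} [TopologicalSpace Q] [T2Space Q]
    (P : ParallelSpace V Q) (v : V) (I J : Set ℝ) (γ δ : ℝ → Q)
    (hγ : P.IsMotion v I γ) (hδ : P.IsMotion v J δ)
    (s : ℝ) (hsI : s ∈ I) (hsJ : s ∈ J) (hs : γ s = δ s) :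
    ∀ t ∈ I ∩ J, γ t = δ t := by
  set S : Set ℝ := I ∩ J with hSdef
  have hSord : S.OrdConnected := hγ.1.inter hδ.1
  have hSpre : IsPreconnected S := hSord.isPreconnected
  haveI : PreconnectedSpace S := Subtype.preconnectedSpace hSpre
  have hγc : Continuous (S.restrict γ) :=
    (hγ.2.1.mono Set.inter_subset_left).restrict
  have hδc : Continuous (S.restrict δ) :=
    (hδ.2.1.mono Set.inter_subset_right).restrict
  set E : Set S := {x | γ (x : ℝ) = δ (x : ℝ)} with hE
  have hclosed : IsClosed E := isClosed_eq hγc hδc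
  have hopen : IsOpen E := by
    rw [isOpen_iff_mem_nhds]
    rintro ⟨x, hxS⟩ hxE
    have hxE' : γ x = δ x := hxE
    obtain ⟨α, hα⟩ := P.chart_cover (γ x)
    have hU : IsOpen ((S.restrict γ) ⁻¹' (P.chart α) ∩ (S.restrict δ) ⁻¹' (P.chart α)) :=
      ((P.chart_open α).preimage hγc).inter ((P.chart_open α).preimage hδc)
    obtain ⟨T, hTopen, hTeq⟩ := isOpen_induced_iff.mp hU
    have hxT : x ∈ T := by
      have : (⟨x, hxS⟩ : S) ∈ Subtype.val ⁻¹' T := by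
        rw [hTeq]
        exact ⟨hα, show δ x ∈ P.chart α from hxE' ▸ hα⟩
      exact this
    obtain ⟨ε, hε, hball⟩ := Metric.isOpen_iff.mp hTopen x hxT
    set J₀ : Set ℝ := Metric.ball x ε ∩ S with hJ₀
    have hballOrd : (Metric.ball x ε).OrdConnected := by
      rw [Real.ball_eq_Ioo]; exact Set.ordConnected_Ioo
    have hJ₀ord : J₀.OrdConnected := hballOrd.inter hSord
    have hmem : ∀ t (ht : t ∈ J₀), (⟨t, ht.2⟩ : S) ∈
        (S.restrict γ) ⁻¹' (P.chart α) ∩ (S.restrict δ) ⁻¹' (P.chart α) := by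
      intro t ht
      have h : (⟨t, ht.2⟩ : S) ∈ Subtype.val ⁻¹' T := hball ht.1
      rw [hTeq] at h
      exact h
    have hγmap : ∀ t ∈ J₀, γ t ∈ P.chart α := fun t ht => (hmem t ht).1
    have hδmap : ∀ t ∈ J₀, δ t ∈ P.chart α := fun t ht => (hmem t ht).2
    have hxJ₀ : x ∈ J₀ := ⟨Metric.mem_ball_self hε, hxS⟩
    have hγeq := hγ.2.2 α J₀ (fun t ht => ht.2.1) hJ₀ord hγmap x hxJ₀
    have hδeq := hδ.2.2 α J₀ (fun t ht => ht.2.2) hJ₀ord hδmap x hxJ₀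
    have key : ∀ t ∈ J₀, γ t = δ t := by
      intro t ht
      apply P.φ_inj α (hγmap t ht) (hδmap t ht)
      rw [hγeq t ht, hδeq t ht, hxE']
    refine mem_nhds_iff.mpr ⟨Subtype.val ⁻¹' (Metric.ball x ε), ?_, ?_, ?_⟩
    · rintro ⟨t, htS⟩ htb
      exact key t ⟨htb, htS⟩
    · exact Metric.isOpen_ball.preimage continuous_subtype_val
    · exact Metric.mem_ball_self hε
  have hne : E.Nonempty := ⟨⟨s, hsI, hsJ⟩, hs⟩
  have huniv : E = Set.univ := (IsClopen.eq_univ ⟨hclosed, hopen⟩ hne)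
  intro t ht
  have : (⟨t, ht⟩ : S) ∈ E := huniv ▸ Set.mem_univ _
  exact this
end

section
/- Let V be a finite-dimensional real vector space, Q a V-parallel space, s ∈ ℝ, p ∈ Q, and v ∈ V. Let I^v_{s,p} be the union of all intervals I ⊆ ℝ containing s on which there exists a motion with constant velocity v taking the value p at s. Then I^v_{s,p} is an interval containing s, and there exists a unique motion γ^v_{s,p} : I^v_{s,p} → Q with constant velocity v and γ^v_{s,p}(s) = p; it extends every motion with constant velocity v that is defined on an interval containing s and takes the value p at s. -/
open Set Filter Topology Pointwise

section Aux

variable {V : Type*} {Q : Type*} [NormedAddCommGroup V] [NormedSpace ℝ V]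
  [TopologicalSpace Q] [T2Space Q] (P : ParallelSpace V Q) {v : V}

/-- Two motions with the same velocity agreeing at one point agree on the
intersection of their domains. -/
theorem ParallelSpace.motion_unique {I₁ I₂ : Set ℝ} {δ₁ δ₂ : ℝ → Q}
    (h₁ : P.IsMotion v I₁ δ₁) (h₂ : P.IsMotion v I₂ δ₂) {s : ℝ}
    (hs₁ : s ∈ I₁) (hs₂ : s ∈ I₂) (hp : δ₁ s = δ₂ s) :
    ∀ t ∈ I₁ ∩ I₂, δ₁ t = δ₂ t := by
  have hKord : (I₁ ∩ I₂).OrdConnected := h₁.1.inter h₂.1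
  have : PreconnectedSpace (I₁ ∩ I₂ : Set ℝ) :=
    Subtype.preconnectedSpace hKord.isPreconnected
  have hc₁ : ContinuousOn δ₁ (I₁ ∩ I₂) := h₁.2.1.mono inter_subset_left
  have hc₂ : ContinuousOn δ₂ (I₁ ∩ I₂) := h₂.2.1.mono inter_subset_right
  have hTclosed : IsClosed {x : (I₁ ∩ I₂ : Set ℝ) | δ₁ ↑x = δ₂ ↑x} :=
    isClosed_eq hc₁.restrict hc₂.restrict
  have hTopen : IsOpen {x : (I₁ ∩ I₂ : Set ℝ) | δ₁ ↑x = δ₂ ↑x} := by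
    rw [isOpen_iff_mem_nhds]
    rintro x hx
    obtain ⟨α, hα⟩ := P.chart_cover (δ₁ ↑x)
    have hα₂ : δ₂ ↑x ∈ P.chart α := hx ▸ hα
    have m₁ : δ₁ ⁻¹' P.chart α ∈ 𝓝[(I₁ ∩ I₂ : Set ℝ)] (↑x : ℝ) :=
      (hc₁ ↑x x.2) ((P.chart_open α).mem_nhds hα)
    have m₂ : δ₂ ⁻¹' P.chart α ∈ 𝓝[(I₁ ∩ I₂ : Set ℝ)] (↑x : ℝ) :=
      (hc₂ ↑x x.2) ((P.chart_open α).mem_nhds hα₂)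
    obtain ⟨ε, hε, hball⟩ := Metric.mem_nhdsWithin_iff.1 (inter_mem m₁ m₂)
    rw [Real.ball_eq_Ioo] at hball
    rw [mem_nhds_subtype]
    refine ⟨Ioo (↑x - ε) (↑x + ε), Ioo_mem_nhds (by linarith) (by linarith), ?_⟩
    rintro y hy
    have hJord : (Ioo (↑x - ε) (↑x + ε) ∩ (I₁ ∩ I₂)).OrdConnected :=
      ordConnected_Ioo.inter hKord
    have hJ₁ : ∀ t ∈ Ioo (↑x - ε) (↑x + ε) ∩ (I₁ ∩ I₂), δ₁ t ∈ P.chart α :=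
      fun t ht => (hball ht).1
    have hJ₂ : ∀ t ∈ Ioo (↑x - ε) (↑x + ε) ∩ (I₁ ∩ I₂), δ₂ t ∈ P.chart α :=
      fun t ht => (hball ht).2
    have hxJ : (↑x : ℝ) ∈ Ioo (↑x - ε) (↑x + ε) ∩ (I₁ ∩ I₂) :=
      ⟨⟨by linarith, by linarith⟩, x.2⟩
    have hyJ : (↑y : ℝ) ∈ Ioo (↑x - ε) (↑x + ε) ∩ (I₁ ∩ I₂) := ⟨hy, y.2⟩
    have e₁ := h₁.2.2 α _ (fun t ht => ht.2.1) hJord hJ₁ ↑x hxJ ↑y hyJ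
    have e₂ := h₂.2.2 α _ (fun t ht => ht.2.2) hJord hJ₂ ↑x hxJ ↑y hyJ
    have heq : P.φ α (δ₁ ↑y) = P.φ α (δ₂ ↑y) := by
      rw [e₁, e₂, hx]
    exact P.φ_inj α (hJ₁ ↑y hyJ) (hJ₂ ↑y hyJ) heq
  have hTne : ({x : (I₁ ∩ I₂ : Set ℝ) | δ₁ ↑x = δ₂ ↑x}).Nonempty :=
    ⟨⟨s, hs₁, hs₂⟩, hp⟩
  have hTuniv : {x : (I₁ ∩ I₂ : Set ℝ) | δ₁ ↑x = δ₂ ↑x} = univ :=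
    IsClopen.eq_univ ⟨hTclosed, hTopen⟩ hTne
  intro t ht
  have h3 : (⟨t, ht⟩ : (I₁ ∩ I₂ : Set ℝ)) ∈
      {x : (I₁ ∩ I₂ : Set ℝ) | δ₁ ↑x = δ₂ ↑x} := hTuniv ▸ mem_univ _
  exact h3

/-- Gluing two motions at a common time `s`. -/
theorem ParallelSpace.motion_glue {I₁ I₂ : Set ℝ} {δ₁ δ₂ : ℝ → Q} {s : ℝ}
    (h₁ : P.IsMotion v I₁ δ₁) (h₂ : P.IsMotion v I₂ δ₂)
    (hs₁ : s ∈ I₁) (hs₂ : s ∈ I₂) (hp : δ₁ s = δ₂ s) :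
    P.IsMotion v ((I₁ ∩ Iic s) ∪ (I₂ ∩ Ici s))
      (fun t => if t ≤ s then δ₁ t else δ₂ t) := by
  have hsA : s ∈ I₁ ∩ Iic s := ⟨hs₁, le_refl s⟩
  have hsB : s ∈ I₂ ∩ Ici s := ⟨hs₂, le_refl s⟩
  have hδA : ∀ t ∈ I₁ ∩ Iic s, (if t ≤ s then δ₁ t else δ₂ t) = δ₁ t :=
    fun t ht => if_pos ht.2
  have hδB : ∀ t ∈ I₂ ∩ Ici s, (if t ≤ s then δ₁ t else δ₂ t) = δ₂ t := by
    intro t ht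
    rcases lt_or_eq_of_le (mem_Ici.1 ht.2) with h | h
    · exact if_neg (not_le.2 h)
    · rw [← h]; simpa using hp
  have hord : ((I₁ ∩ Iic s) ∪ (I₂ ∩ Ici s)).OrdConnected := by
    constructor
    rintro x hx y hy z hz
    rcases le_total z s with hzs | hzs
    · left
      rcases hx with hx | hx
      · exact ⟨h₁.1.out hx.1 hs₁ ⟨hz.1, hzs⟩, hzs⟩
      · have hzeq : z = s := le_antisymm hzs (le_trans hx.2 hz.1)
        exact hzeq ▸ hsA
    · right
      rcases hy with hy | hy
      · have hzeq : z = s := le_antisymm (le_trans hz.2 hy.2) hzs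
        exact hzeq ▸ hsB
      · exact ⟨h₂.1.out hs₂ hy.1 ⟨hzs, hz.2⟩, hzs⟩
  refine ⟨hord, ?_, ?_⟩
  · intro t ht
    rw [continuousWithinAt_union]
    constructor
    · rcases le_or_gt t s with hts | hts
      · have htA : t ∈ I₁ ∩ Iic s := by
          rcases ht with ht | ht
          · exact ht
          · have hteq : t = s := le_antisymm hts ht.2
            exact hteq ▸ hsA
        exact ((h₁.2.1.mono inter_subset_left) t htA).congr hδA (hδA t htA)
      · refine continuousWithinAt_of_notMem_closure ?_
        intro hcl
        have h4 : t ∈ Iic s := isClosed_Iic.closure_subset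
          (closure_mono inter_subset_right hcl)
        exact absurd h4 (not_le.2 hts)
    · rcases lt_or_ge t s with hts | hts
      · refine continuousWithinAt_of_notMem_closure ?_
        intro hcl
        have h4 : t ∈ Ici s := isClosed_Ici.closure_subset
          (closure_mono inter_subset_right hcl)
        exact absurd h4 (not_le.2 hts)
      · have htB : t ∈ I₂ ∩ Ici s := by
          rcases ht with ht | ht
          · have hteq : t = s := le_antisymm ht.2 hts
            exact hteq ▸ hsB
          · exact ht
        exact ((h₂.2.1.mono inter_subset_left) t htB).congr hδB (hδB t htB)
  · intro α J hJsub hJord hJchart a ha b hb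
    show P.φ α (if b ≤ s then δ₁ b else δ₂ b) =
      P.φ α (if a ≤ s then δ₁ a else δ₂ a) + (b - a) • v
    have hJA : J ∩ Iic s ⊆ I₁ ∩ Iic s := by
      rintro t ⟨htJ, hts⟩
      rcases hJsub htJ with h | h
      · exact h
      · have hteq : t = s := le_antisymm hts h.2
        exact hteq ▸ hsA
    have hJB : J ∩ Ici s ⊆ I₂ ∩ Ici s := by
      rintro t ⟨htJ, hts⟩
      rcases hJsub htJ with h | h
      · have hteq : t = s := le_antisymm h.2 hts
        exact hteq ▸ hsB
      · exact h
    have hord₁ : (J ∩ Iic s).OrdConnected := hJord.inter ordConnected_Iic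
    have hord₂ : (J ∩ Ici s).OrdConnected := hJord.inter ordConnected_Ici
    have hch₁ : ∀ t ∈ J ∩ Iic s, δ₁ t ∈ P.chart α := by
      intro t ht
      have h7 : (if t ≤ s then δ₁ t else δ₂ t) ∈ P.chart α := hJchart t ht.1
      rwa [hδA t (hJA ht)] at h7
    have hch₂ : ∀ t ∈ J ∩ Ici s, δ₂ t ∈ P.chart α := by
      intro t ht
      have h7 : (if t ≤ s then δ₁ t else δ₂ t) ∈ P.chart α := hJchart t ht.1
      rwa [hδB t (hJB ht)] at h7
    have key₁ := h₁.2.2 α (J ∩ Iic s) (fun t ht => (hJA ht).1) hord₁ hch₁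
    have key₂ := h₂.2.2 α (J ∩ Ici s) (fun t ht => (hJB ht).1) hord₂ hch₂
    have mixed : ∀ x ∈ J, ∀ y ∈ J, x ≤ s → s ≤ y →
        P.φ α (if y ≤ s then δ₁ y else δ₂ y) =
          P.φ α (if x ≤ s then δ₁ x else δ₂ x) + (y - x) • v := by
      intro x hx y hy hxs hsy
      have hsJ : s ∈ J := hJord.out hx hy ⟨hxs, hsy⟩
      have e₁ := key₁ x ⟨hx, hxs⟩ s ⟨hsJ, le_refl s⟩
      have e₂ := key₂ s ⟨hsJ, le_refl s⟩ y ⟨hy, hsy⟩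
      rw [hδA x (hJA ⟨hx, hxs⟩), hδB y (hJB ⟨hy, hsy⟩), e₂, ← hp, e₁, add_assoc, ← add_smul]
      ring_nf
    rcases le_total a s with has | has <;> rcases le_total b s with hbs | hbs
    · rw [hδA a (hJA ⟨ha, has⟩), hδA b (hJA ⟨hb, hbs⟩)]
      exact key₁ a ⟨ha, has⟩ b ⟨hb, hbs⟩
    · exact mixed a ha b hb has hbs
    · have h5 := mixed b hb a ha hbs has
      have h6 : P.φ α (if b ≤ s then δ₁ b else δ₂ b) =
          P.φ α (if a ≤ s then δ₁ a else δ₂ a) - (a - b) • v := by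
        rw [h5]; abel
      rw [h6, sub_eq_add_neg, ← neg_smul]
      ring_nf
    · rw [hδB a (hJB ⟨ha, has⟩), hδB b (hJB ⟨hb, hbs⟩)]
      exact key₂ a ⟨ha, has⟩ b ⟨hb, hbs⟩

end Aux

section Aux2

variable {V : Type*} {Q : Type*} [NormedAddCommGroup V] [NormedSpace ℝ V]
  [TopologicalSpace Q] [T2Space Q] (P : ParallelSpace V Q)

/-- The trivial motion staying at `p` on the singleton interval `{s}`. -/
theorem ParallelSpace.isMotion_singleton (v : V) (s : ℝ) (p : Q) :
    P.IsMotion v {s} (fun _ => p) := by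
  refine ⟨ordConnected_singleton, continuousOn_const, ?_⟩
  intro α J hJsub hJord hch a ha b hb
  have ha' : a = s := hJsub ha
  have hb' : b = s := hJsub hb
  subst ha'
  rw [hb']
  simp

theorem ParallelSpace.self_mem_maxInterval (v : V) (s : ℝ) (p : Q) :
    s ∈ P.maxInterval v s p :=
  mem_sUnion.2 ⟨{s}, ⟨rfl, fun _ => p, P.isMotion_singleton v s p, rfl⟩, rfl⟩

open Classical in
/-- The canonical maximal motion, defined by choice. -/
noncomputable def ParallelSpace.maxMotion (v : V) (s : ℝ) (p : Q) : ℝ → Q :=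
  fun t =>
    if h : ∃ d : Set ℝ × (ℝ → Q), s ∈ d.1 ∧ P.IsMotion v d.1 d.2 ∧ d.2 s = p ∧ t ∈ d.1
    then h.choose.2 t else p

theorem ParallelSpace.maxMotion_eq {v : V} {s : ℝ} {p : Q} {I : Set ℝ} {δ : ℝ → Q}
    (hsI : s ∈ I) (hm : P.IsMotion v I δ) (hδs : δ s = p) {t : ℝ} (htI : t ∈ I) :
    P.maxMotion v s p t = δ t := by
  classical
  have hex : ∃ d : Set ℝ × (ℝ → Q),
      s ∈ d.1 ∧ P.IsMotion v d.1 d.2 ∧ d.2 s = p ∧ t ∈ d.1 := ⟨(I, δ), hsI, hm, hδs, htI⟩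
  simp only [ParallelSpace.maxMotion]
  rw [dif_pos hex]
  obtain ⟨h1, h2, h3, h4⟩ := hex.choose_spec
  exact P.motion_unique h2 hm h1 hsI (h3.trans hδs.symm) t ⟨h4, htI⟩

theorem ParallelSpace.maxInterval_ordConnected (v : V) (s : ℝ) (p : Q) :
    (P.maxInterval v s p).OrdConnected := by
  constructor
  rintro x hx y hy z hz
  obtain ⟨Ix, ⟨hsx, δx, hmx, hpx⟩, hxx⟩ := mem_sUnion.1 hx
  obtain ⟨Iy, ⟨hsy, δy, hmy, hpy⟩, hyy⟩ := mem_sUnion.1 hy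
  rcases le_total z s with hzs | hzs
  · exact mem_sUnion.2 ⟨Ix, ⟨hsx, δx, hmx, hpx⟩, hmx.1.out hxx hsx ⟨hz.1, hzs⟩⟩
  · exact mem_sUnion.2 ⟨Iy, ⟨hsy, δy, hmy, hpy⟩, hmy.1.out hsy hyy ⟨hzs, hz.2⟩⟩

/-- Any two points of the maximal interval lie in a common admissible interval. -/
theorem ParallelSpace.exists_common_motion {v : V} {s : ℝ} {p : Q} {a b : ℝ}
    (ha : a ∈ P.maxInterval v s p) (hb : b ∈ P.maxInterval v s p) :
    ∃ (I : Set ℝ) (δ : ℝ → Q),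
      s ∈ I ∧ P.IsMotion v I δ ∧ δ s = p ∧ a ∈ I ∧ b ∈ I := by
  obtain ⟨Ia, ⟨hsa, δa, hma, hpa⟩, haa⟩ := mem_sUnion.1 ha
  obtain ⟨Ib, ⟨hsb, δb, hmb, hpb⟩, hbb⟩ := mem_sUnion.1 hb
  rcases le_total a s with has | has <;> rcases le_total b s with hbs | hbs
  · rcases le_total a b with hab | hab
    · exact ⟨Ia, δa, hsa, hma, hpa, haa, hma.1.out haa hsa ⟨hab, hbs⟩⟩
    · exact ⟨Ib, δb, hsb, hmb, hpb, hmb.1.out hbb hsb ⟨hab, has⟩, hbb⟩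
  · refine ⟨(Ia ∩ Iic s) ∪ (Ib ∩ Ici s), fun t => if t ≤ s then δa t else δb t,
      Or.inl ⟨hsa, le_refl s⟩, P.motion_glue hma hmb hsa hsb (hpa.trans hpb.symm),
      by simpa using hpa, Or.inl ⟨haa, has⟩, Or.inr ⟨hbb, hbs⟩⟩
  · refine ⟨(Ib ∩ Iic s) ∪ (Ia ∩ Ici s), fun t => if t ≤ s then δb t else δa t,
      Or.inl ⟨hsb, le_refl s⟩, P.motion_glue hmb hma hsb hsa (hpb.trans hpa.symm),
      by simpa using hpb, Or.inr ⟨haa, has⟩, Or.inl ⟨hbb, hbs⟩⟩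
  · rcases le_total a b with hab | hab
    · exact ⟨Ib, δb, hsb, hmb, hpb, hmb.1.out hsb hbb ⟨has, hab⟩, hbb⟩
    · exact ⟨Ia, δa, hsa, hma, hpa, haa, hma.1.out hsa haa ⟨hbs, hab⟩⟩

theorem ParallelSpace.maxMotion_isMotion (v : V) (s : ℝ) (p : Q) :
    P.IsMotion v (P.maxInterval v s p) (P.maxMotion v s p) := by
  refine ⟨P.maxInterval_ordConnected v s p, ?_, ?_⟩
  · -- continuity
    intro t ht
    obtain ⟨a, haM, hat, hna⟩ : ∃ a, a ∈ P.maxInterval v s p ∧ a ≤ t ∧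
        ∀ᶠ u in 𝓝 t, u ∈ P.maxInterval v s p → a ≤ u := by
      by_cases hl : (P.maxInterval v s p ∩ Iio t).Nonempty
      · obtain ⟨a, haM, hat⟩ := hl
        exact ⟨a, haM, le_of_lt hat,
          eventually_of_mem (Ioi_mem_nhds hat) fun u hu _ => le_of_lt hu⟩
      · exact ⟨t, ht, le_refl t, Eventually.of_forall fun u hu =>
          le_of_not_gt fun hut => hl ⟨u, hu, hut⟩⟩
    obtain ⟨b, hbM, htb, hnb⟩ : ∃ b, b ∈ P.maxInterval v s p ∧ t ≤ b ∧
        ∀ᶠ u in 𝓝 t, u ∈ P.maxInterval v s p → u ≤ b := by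
      by_cases hr : (P.maxInterval v s p ∩ Ioi t).Nonempty
      · obtain ⟨b, hbM, htbb⟩ := hr
        exact ⟨b, hbM, le_of_lt htbb,
          eventually_of_mem (Iio_mem_nhds htbb) fun u hu _ => le_of_lt hu⟩
      · exact ⟨t, ht, le_refl t, Eventually.of_forall fun u hu =>
          le_of_not_gt fun hut => hr ⟨u, hu, hut⟩⟩
    obtain ⟨I, δ, hsI, hm, hδs, haI, hbI⟩ := P.exists_common_motion haM hbM
    have htI : t ∈ I := hm.1.out haI hbI ⟨hat, htb⟩
    have hImem : I ∈ 𝓝[P.maxInterval v s p] t := by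
      have hev : ∀ᶠ u in 𝓝[P.maxInterval v s p] t, u ∈ I := by
        rw [eventually_nhdsWithin_iff]
        filter_upwards [hna, hnb] with u h1 h2 hu
        exact hm.1.out haI hbI ⟨h1 hu, h2 hu⟩
      exact hev
    have hδcont : ContinuousWithinAt δ I t := hm.2.1 t htI
    refine ((hδcont.mono_of_mem_nhdsWithin hImem).congr_of_eventuallyEq ?_ ?_)
    · exact eventually_of_mem hImem fun u hu => P.maxMotion_eq hsI hm hδs hu
    · exact P.maxMotion_eq hsI hm hδs htI
  · -- local chart property
    intro α J hJsub hJord hJch a ha b hb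
    obtain ⟨I, δ, hsI, hm, hδs, haI, hbI⟩ := P.exists_common_motion (hJsub ha) (hJsub hb)
    have hJ'sub : J ∩ I ⊆ I := inter_subset_right
    have hJ'ord : (J ∩ I).OrdConnected := hJord.inter hm.1
    have hJ'ch : ∀ u ∈ J ∩ I, δ u ∈ P.chart α := by
      intro u hu
      have := hJch u hu.1
      rwa [P.maxMotion_eq hsI hm hδs hu.2] at this
    have key := hm.2.2 α (J ∩ I) hJ'sub hJ'ord hJ'ch a ⟨ha, haI⟩ b ⟨hb, hbI⟩
    rw [P.maxMotion_eq hsI hm hδs haI, P.maxMotion_eq hsI hm hδs hbI]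
    exact key

theorem ParallelSpace.maxMotion_self (v : V) (s : ℝ) (p : Q) :
    P.maxMotion v s p s = p := by
  have := P.maxMotion_eq (I := {s}) (δ := fun _ => p) (Set.mem_singleton s)
    (P.isMotion_singleton v s p) rfl (Set.mem_singleton s)
  simpa using this

end Aux2

/-- the set `I^v_{s,p}` is an interval containing `s`, and it carries a unique
maximal motion with constant velocity `v` taking the value `p` at time `s`, which extends
every motion with constant velocity `v` defined on an interval containing `s` and equal to
`p` at `s`. -/
theorem maximal_motion {V : Type*} [NormedAddCommGroup V] [NormedSpace ℝ V]
    [FiniteDimensional ℝ V] {Q : Type*} [TopologicalSpace Q] [T2Space Q]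
    (P : ParallelSpace V Q) (v : V) (s : ℝ) (p : Q) :
    s ∈ P.maxInterval v s p ∧ (P.maxInterval v s p).OrdConnected ∧
    ∃ γ : ℝ → Q, P.IsMotion v (P.maxInterval v s p) γ ∧ γ s = p ∧
      (∀ (I : Set ℝ) (δ : ℝ → Q), P.IsMotion v I δ → s ∈ I → δ s = p →
        I ⊆ P.maxInterval v s p ∧ ∀ t ∈ I, δ t = γ t) ∧
      (∀ γ' : ℝ → Q, P.IsMotion v (P.maxInterval v s p) γ' → γ' s = p →
        ∀ t ∈ P.maxInterval v s p, γ' t = γ t) := by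
  refine ⟨P.self_mem_maxInterval v s p, P.maxInterval_ordConnected v s p,
    P.maxMotion v s p, P.maxMotion_isMotion v s p, P.maxMotion_self v s p, ?_, ?_⟩
  · intro I δ hm hsI hδs
    refine ⟨fun t htI => mem_sUnion.2 ⟨I, ⟨hsI, δ, hm, hδs⟩, htI⟩, fun t htI => ?_⟩
    exact (P.maxMotion_eq hsI hm hδs htI).symm
  · intro γ' hm' hs' t htM
    exact (P.maxMotion_eq (P.self_mem_maxInterval v s p) hm' hs' htM).symm
end

section
/- Let V be a finite-dimensional real vector space and S a closed, connected subset of V such that every point x ∈ S has a neighborhood U in V for which S ∩ U is convex. Then S is convex. -/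
open Set Filter Topology


private lemma chain_extend {V : Type*} [NormedAddCommGroup V] [NormedSpace ℝ V]
    {S : Set V} {x y y' : V} {R ε : ℝ} (hε : 0 < ε) {n : ℕ} {c : ℕ → V}
    (h0 : c 0 = x) (hn : c n = y)
    (hmem : ∀ i ≤ n, c i ∈ S ∧ ‖c i‖ ≤ R)
    (hstep : ∀ i < n, ‖c (i + 1) - c i‖ ≤ ε)
    (hseg : segment ℝ y y' ⊆ S) :
    ∃ m : ℕ, ∃ d : ℕ → V, d 0 = x ∧ d m = y' ∧
      (∀ i ≤ m, d i ∈ S ∧ ‖d i‖ ≤ R + ‖y' - y‖) ∧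
      ∀ i < m, ‖d (i + 1) - d i‖ ≤ ε := by
  classical
  set k : ℕ := max 1 ⌈‖y' - y‖ / ε⌉₊ with hk
  have hk1 : 1 ≤ k := le_max_left _ _
  have hk0 : (0:ℝ) < (k:ℝ) := by exact_mod_cast hk1
  have hkε : ‖y' - y‖ / (k:ℝ) ≤ ε := by
    rw [div_le_iff₀ hk0]
    have h1 : ‖y' - y‖ / ε ≤ (k:ℝ) := le_trans (Nat.le_ceil _) (by exact_mod_cast le_max_right _ _)
    calc ‖y' - y‖ = (‖y' - y‖ / ε) * ε := by field_simp
    _ ≤ (k:ℝ) * ε := by nlinarith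
    _ = ε * k := mul_comm _ _
  set d : ℕ → V := fun i => if i ≤ n then c i else y + (((min (i - n) k : ℕ) : ℝ) / k) • (y' - y)
    with hd
  have deq : ∀ i, n ≤ i → d i = y + (((min (i - n) k : ℕ) : ℝ) / k) • (y' - y) := by
    intro i hi
    rcases eq_or_lt_of_le hi with h | h
    · simp [hd, ← h, hn]
    · simp [hd, Nat.not_le.mpr h]
  have segpt : ∀ t : ℝ, 0 ≤ t → t ≤ 1 →
      y + t • (y' - y) ∈ S ∧ ‖y + t • (y' - y)‖ ≤ R + ‖y' - y‖ := by
    intro t ht0 ht1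
    constructor
    · apply hseg
      rw [segment_eq_image']
      exact ⟨t, ⟨ht0, ht1⟩, rfl⟩
    · calc ‖y + t • (y' - y)‖ ≤ ‖y‖ + ‖t • (y' - y)‖ := norm_add_le _ _
      _ = ‖y‖ + t * ‖y' - y‖ := by rw [norm_smul, Real.norm_of_nonneg ht0]
      _ ≤ R + ‖y' - y‖ := by
          have h2 := (hmem n le_rfl).2
          rw [hn] at h2
          nlinarith [norm_nonneg (y' - y)]
  refine ⟨n + k, d, ?_, ?_, ?_, ?_⟩
  · simp [hd, h0]
  · rw [deq _ (Nat.le_add_right _ _)]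
    simp [Nat.add_sub_cancel_left, div_self (ne_of_gt hk0)]
  · intro i hi
    by_cases h : i ≤ n
    · have := hmem i h
      simp only [hd, if_pos h]
      exact ⟨this.1, le_trans this.2 (by nlinarith [norm_nonneg (y' - y)])⟩
    · push_neg at h
      rw [deq i h.le]
      have ht0 : (0:ℝ) ≤ ((min (i - n) k : ℕ) : ℝ) / k := by positivity
      have ht1 : ((min (i - n) k : ℕ) : ℝ) / k ≤ 1 := by
        rw [div_le_one hk0]
        exact_mod_cast min_le_right _ _
      exact segpt _ ht0 ht1
  · intro i hi
    by_cases h : i < n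
    · have h1 : i + 1 ≤ n := h
      simp only [hd, if_pos h1, if_pos h.le]
      exact hstep i h
    · push_neg at h
      rw [deq i h, deq (i + 1) (le_trans h (Nat.le_succ i))]
      have hsub : i + 1 - n = (i - n) + 1 := by omega
      set a := i - n with ha
      have hmono : min a k ≤ min (a + 1) k := by omega
      have hone : min (a + 1) k - min a k ≤ 1 := by omega
      have : (y + (((min (a+1) k : ℕ) : ℝ) / k) • (y' - y)) - (y + (((min a k : ℕ) : ℝ) / k) • (y' - y))
          = ((((min (a+1) k - min a k : ℕ) : ℝ)) / k) • (y' - y) := by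
        rw [Nat.cast_sub hmono, sub_div]
        module
      rw [hsub, this, norm_smul]
      have hnum : (((min (a+1) k - min a k : ℕ) : ℝ)) ≤ 1 := by exact_mod_cast hone
      calc ‖(((min (a+1) k - min a k : ℕ) : ℝ)) / k‖ * ‖y' - y‖
          ≤ (1 / k) * ‖y' - y‖ := by
            apply mul_le_mul_of_nonneg_right _ (norm_nonneg _)
            rw [Real.norm_of_nonneg (by positivity)]
            gcongr
      _ = ‖y' - y‖ / k := by ring
      _ ≤ ε := hkε

private lemma chain_connected {V : Type*} [NormedAddCommGroup V] [NormedSpace ℝ V]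
    {S : Set V} (hconn : IsConnected S)
    (hloc : ∀ x ∈ S, ∃ U ∈ nhds x, Convex ℝ (S ∩ U))
    {x : V} (hx : x ∈ S) {y : V} (hy : y ∈ S) :
    ∃ R : ℝ, ∀ ε > (0:ℝ), ∃ n : ℕ, ∃ c : ℕ → V, c 0 = x ∧ c n = y ∧
      (∀ i ≤ n, c i ∈ S ∧ ‖c i‖ ≤ R) ∧ ∀ i < n, ‖c (i + 1) - c i‖ ≤ ε := by
  classical
  set T : Set V := {z | z ∈ S ∧ ∃ R : ℝ, ∀ ε > (0:ℝ), ∃ n : ℕ, ∃ c : ℕ → V,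
    c 0 = x ∧ c n = z ∧ (∀ i ≤ n, c i ∈ S ∧ ‖c i‖ ≤ R) ∧
    ∀ i < n, ‖c (i + 1) - c i‖ ≤ ε} with hT
  -- extension property
  have hext : ∀ z ∈ T, ∀ z' ∈ S, segment ℝ z z' ⊆ S → z' ∈ T := by
    intro z hz z' hz' hseg
    obtain ⟨hzS, R, hR⟩ := hz
    refine ⟨hz', R + ‖z' - z‖, fun ε hε => ?_⟩
    obtain ⟨n, c, h0, hn, hmem, hstep⟩ := hR ε hε
    exact chain_extend hε h0 hn hmem hstep hseg
  have hxT : x ∈ T := by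
    refine ⟨hx, ‖x‖, fun ε hε => ⟨0, fun _ => x, rfl, rfl, ?_, ?_⟩⟩
    · intro i hi; exact ⟨hx, le_rfl⟩
    · intro i hi; omega
  -- clopen argument in the subtype
  haveI : ConnectedSpace S := Subtype.connectedSpace hconn
  set A : Set S := Subtype.val ⁻¹' T with hA
  have hopen : IsOpen A := by
    rw [isOpen_iff_mem_nhds]
    rintro ⟨z, hzS⟩ hzA
    obtain ⟨U, hU, hconv⟩ := hloc z hzS
    have : Subtype.val ⁻¹' U ∈ nhds (⟨z, hzS⟩ : S) := by
      rw [nhds_induced]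
      exact preimage_mem_comap hU
    apply mem_of_superset this
    rintro ⟨w, hwS⟩ hwU
    have hzU : z ∈ S ∩ U := ⟨hzS, mem_of_mem_nhds hU⟩
    have hwU' : w ∈ S ∩ U := ⟨hwS, hwU⟩
    have hseg : segment ℝ z w ⊆ S :=
      (hconv.segment_subset hzU hwU').trans (inter_subset_left)
    exact hext z hzA w hwS hseg
  have hclosedA : IsClosed A := by
    rw [← isOpen_compl_iff, isOpen_iff_mem_nhds]
    rintro ⟨z, hzS⟩ hzA
    obtain ⟨U, hU, hconv⟩ := hloc z hzS
    have : Subtype.val ⁻¹' U ∈ nhds (⟨z, hzS⟩ : S) := by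
      rw [nhds_induced]
      exact preimage_mem_comap hU
    apply mem_of_superset this
    rintro ⟨w, hwS⟩ hwU hwA
    apply hzA
    have hzU : z ∈ S ∩ U := ⟨hzS, mem_of_mem_nhds hU⟩
    have hwU' : w ∈ S ∩ U := ⟨hwS, hwU⟩
    have hseg : segment ℝ w z ⊆ S :=
      (hconv.segment_subset hwU' hzU).trans (inter_subset_left)
    exact hext w hwA z hzS hseg
  have : A = univ := by
    rcases isClopen_iff.mp ⟨hclosedA, hopen⟩ with h | h
    · exfalso
      have : (⟨x, hx⟩ : ↥S) ∈ A := hxT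
      rw [h] at this
      exact this
    · exact h
  have hyT : y ∈ T := by
    have : (⟨y, hy⟩ : ↥S) ∈ A := this ▸ mem_univ _
    exact this
  exact hyT.2

private lemma uniform_conv {V : Type*} [NormedAddCommGroup V] [NormedSpace ℝ V]
    [FiniteDimensional ℝ V] {S : Set V} (hclosed : IsClosed S)
    (hloc : ∀ x ∈ S, ∃ U ∈ nhds x, Convex ℝ (S ∩ U)) (R : ℝ) :
    ∃ ε > (0:ℝ), ∀ p ∈ S, ‖p‖ ≤ R → ∃ C : Set V, Convex ℝ C ∧ C ⊆ S ∧
      ∀ q ∈ S, ‖q - p‖ < 3 * ε → q ∈ C := by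
  choose U hU hUc using hloc
  have hK : IsCompact (S ∩ Metric.closedBall (0:V) R) :=
    (isCompact_closedBall (0:V) R).inter_left hclosed
  have hcover : S ∩ Metric.closedBall (0:V) R ⊆
      ⋃ i : {z : V // z ∈ S}, interior (U i.1 i.2) := by
    rintro p ⟨hpS, -⟩
    exact mem_iUnion.mpr ⟨⟨p, hpS⟩, mem_interior_iff_mem_nhds.mpr (hU p hpS)⟩
  obtain ⟨δ, hδ, hleb⟩ :=
    lebesgue_number_lemma_of_metric hK (fun i => isOpen_interior) hcover
  refine ⟨δ / 3, by linarith, fun p hpS hpR => ?_⟩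
  obtain ⟨i, hball⟩ := hleb p ⟨hpS, by simpa [Metric.mem_closedBall, dist_zero_right] using hpR⟩
  refine ⟨S ∩ U i.1 i.2, hUc i.1 i.2, inter_subset_left, fun q hqS hq => ?_⟩
  refine ⟨hqS, interior_subset (hball ?_)⟩
  rw [Metric.mem_ball, dist_eq_norm]
  linarith

private lemma par_ineq {E : Type*} [NormedAddCommGroup E] [InnerProductSpace ℝ E]
    {A B P : E} (h : (2:ℝ) • P - (A + B) ≠ 0) :
    ‖(2⁻¹:ℝ) • (B - A)‖ ^ 2 + ‖(2⁻¹:ℝ) • (B - A)‖ ^ 2 < ‖P - A‖ ^ 2 + ‖B - P‖ ^ 2 := by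
  have hpar := parallelogram_law_with_norm ℝ (P - A) (B - P)
  have hsum1 : (P - A) + (B - P) = B - A := by abel
  have hsum2 : (P - A) - (B - P) = (2:ℝ) • P - (A + B) := by
    rw [two_smul]; abel
  rw [hsum1, hsum2] at hpar
  have hpos : 0 < ‖(2:ℝ) • P - (A + B)‖ := norm_pos_iff.mpr h
  have hhalf : ‖(2⁻¹:ℝ) • (B - A)‖ = 2⁻¹ * ‖B - A‖ := by rw [norm_smul]; simp
  rw [hhalf]
  set u := ‖P - A‖
  set v := ‖B - P‖
  set w := ‖B - A‖
  set z := ‖(2:ℝ) • P - (A + B)‖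
  nlinarith [hpar, hpos]

private lemma equally_spaced {V : Type*} [NormedAddCommGroup V] [NormedSpace ℝ V]
    [FiniteDimensional ℝ V] {S : Set V} (hclosed : IsClosed S)
    {R ε : ℝ} (hε : 0 < ε)
    (hstar : ∀ p ∈ S, ‖p‖ ≤ R → ∃ C : Set V, Convex ℝ C ∧ C ⊆ S ∧
      ∀ q ∈ S, ‖q - p‖ < 3 * ε → q ∈ C)
    {x y : V} {n : ℕ} (hn : 0 < n) {c : ℕ → V}
    (h0 : c 0 = x) (hcn : ∀ i, n ≤ i → c i = y)
    (hmemc : ∀ i, c i ∈ S ∩ Metric.closedBall (0:V) R)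
    (hstepc : ∀ i < n, ‖c (i + 1) - c i‖ ≤ ε) :
    ∀ i ≤ n, x + ((i : ℝ) / n) • (y - x) ∈ S := by
  classical
  set K := S ∩ Metric.closedBall (0:V) R with hKdef
  have hKclosed : IsClosed K := hclosed.inter Metric.isClosed_closedBall
  have hKcomp : IsCompact K := (isCompact_closedBall (0:V) R).inter_left hclosed
  set e := toEuclidean (E := V) with he
  set A : Set (ℕ → V) := {b | b 0 = x ∧ (∀ i, b i ∈ K) ∧ (∀ i, n ≤ i → b i = y) ∧
    ∀ i < n, ‖b (i + 1) - b i‖ ≤ ε} with hA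
  have hAne : A.Nonempty := ⟨c, h0, hmemc, hcn, hstepc⟩
  have hAclosed : IsClosed A := by
    have : A = {b : ℕ → V | b 0 = x} ∩ ((⋂ i, {b : ℕ → V | b i ∈ K}) ∩
        ((⋂ i, {b : ℕ → V | n ≤ i → b i = y}) ∩
         (⋂ i, {b : ℕ → V | i < n → ‖b (i + 1) - b i‖ ≤ ε}))) := by
      ext b
      simp only [hA, mem_setOf_eq, mem_inter_iff, mem_iInter]
      try tauto
    rw [this]
    refine (isClosed_eq (continuous_apply 0) continuous_const).inter
      ((isClosed_iInter fun i => hKclosed.preimage (continuous_apply i)).inter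
        ((isClosed_iInter fun i => ?_).inter (isClosed_iInter fun i => ?_)))
    · by_cases h : n ≤ i
      · simp only [h, forall_true_left]
        exact isClosed_eq (continuous_apply i) continuous_const
      · simp only [h, false_implies, setOf_true]
        exact isClosed_univ
    · by_cases h : i < n
      · simp only [h, forall_true_left]
        exact isClosed_le (((continuous_apply (i+1)).sub (continuous_apply i)).norm)
          continuous_const
      · simp only [h, false_implies, setOf_true]
        exact isClosed_univ
  have hAcomp : IsCompact A := by
    refine IsCompact.of_isClosed_subset (isCompact_univ_pi fun _ : ℕ => hKcomp) hAclosed ?_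
    intro b hb
    exact fun i _ => hb.2.1 i
  set F : (ℕ → V) → ℝ := fun b => ∑ i ∈ Finset.range n, ‖e (b (i + 1)) - e (b i)‖ ^ 2
    with hF
  have hFcont : Continuous F := by
    apply continuous_finset_sum
    intro i _
    exact (((e.continuous.comp (continuous_apply (i+1))).sub
      (e.continuous.comp (continuous_apply i))).norm.pow 2)
  obtain ⟨b, hbA, hbmin⟩ := hAcomp.exists_isMinOn hAne hFcont.continuousOn
  obtain ⟨hb0, hbK, hbtail, hbstep⟩ := hbA
  -- midpoint property
  have hmid : ∀ k, k + 2 ≤ n → b (k + 1) = (2⁻¹ : ℝ) • (b k + b (k + 2)) := by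
    intro k hk
    by_contra hne
    set p := b (k + 1) with hp
    set a := b k with ha
    set bb := b (k + 2) with hbb
    set m : V := (2⁻¹ : ℝ) • (a + bb) with hm
    have hpS : p ∈ S := (hbK (k+1)).1
    have hpR : ‖p‖ ≤ R := by
      have := (hbK (k+1)).2
      simpa [Metric.mem_closedBall, dist_zero_right] using this
    obtain ⟨C, hCconv, hCS, hCin⟩ := hstar p hpS hpR
    have hstep1 : ‖a - p‖ ≤ ε := by
      have := hbstep k (by omega)
      rw [← hp, ← ha] at this
      rw [← norm_neg]
      simpa [neg_sub] using this
    have hstep2 : ‖bb - p‖ ≤ ε := by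
      have := hbstep (k+1) (by omega)
      simpa [← hp, ← hbb] using this
    have haC : a ∈ C := hCin a (hbK k).1 (by linarith)
    have hbbC : bb ∈ C := hCin bb (hbK (k+2)).1 (by linarith)
    have hmC : m ∈ C := by
      have := hCconv haC hbbC (by norm_num : (0:ℝ) ≤ 2⁻¹) (by norm_num : (0:ℝ) ≤ 2⁻¹)
        (by norm_num)
      rw [hm, smul_add]
      exact this
    have hmS : m ∈ S := hCS hmC
    have hmK : m ∈ K := by
      refine ⟨hmS, ?_⟩
      have h1 := (hbK k).2
      have h2 := (hbK (k+2)).2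
      have := (convex_closedBall (0:V) R) h1 h2 (by norm_num : (0:ℝ) ≤ 2⁻¹)
        (by norm_num : (0:ℝ) ≤ 2⁻¹) (by norm_num)
      rw [hm, smul_add]
      exact this
    have hba : ‖bb - a‖ ≤ 2 * ε := by
      calc ‖bb - a‖ = ‖(bb - p) + (p - a)‖ := by abel_nf
      _ ≤ ‖bb - p‖ + ‖p - a‖ := norm_add_le _ _
      _ ≤ 2 * ε := by
          rw [← norm_neg (p - a)] at *
          simp only [neg_sub] at *
          linarith
    have hma : ‖m - a‖ ≤ ε := by
      have : m - a = (2⁻¹ : ℝ) • (bb - a) := by rw [hm]; module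
      rw [this, norm_smul]
      simp only [norm_inv, Real.norm_ofNat]
      linarith
    have hbm : ‖bb - m‖ ≤ ε := by
      have : bb - m = (2⁻¹ : ℝ) • (bb - a) := by rw [hm]; module
      rw [this, norm_smul]
      simp only [norm_inv, Real.norm_ofNat]
      linarith
    set b' := Function.update b (k + 1) m with hb'
    have hb'A : b' ∈ A := by
      refine ⟨?_, ?_, ?_, ?_⟩
      · rw [hb', Function.update_of_ne (by omega : (0:ℕ) ≠ k + 1)]
        exact hb0
      · intro i
        by_cases h : i = k + 1
        · rw [hb', h, Function.update_self]
          exact hmK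
        · rw [hb', Function.update_of_ne h]
          exact hbK i
      · intro i hi
        rw [hb', Function.update_of_ne (by omega : i ≠ k + 1)]
        exact hbtail i hi
      · intro i hi
        rcases eq_or_ne i k with rfl | h1
        · rw [hb', Function.update_self, Function.update_of_ne (by omega : i ≠ i + 1)]
          exact hma
        · rcases eq_or_ne i (k + 1) with rfl | h2
          · rw [hb', Function.update_self, Function.update_of_ne (by omega : k + 1 + 1 ≠ k + 1)]
            exact hbm
          · rw [hb', Function.update_of_ne h2,
              Function.update_of_ne (by omega : i + 1 ≠ k + 1)]
            exact hbstep i hi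
    -- F decreases strictly
    have hlt : F b' < F b := by
      set g : ℕ → ℝ := fun i => ‖e (b' (i + 1)) - e (b' i)‖ ^ 2 with hg
      set f : ℕ → ℝ := fun i => ‖e (b (i + 1)) - e (b i)‖ ^ 2 with hf
      have hkmem : k ∈ Finset.range n := Finset.mem_range.mpr (by omega)
      have hk1mem : k + 1 ∈ (Finset.range n).erase k := by
        rw [Finset.mem_erase]
        exact ⟨by omega, Finset.mem_range.mpr (by omega)⟩
      have hsplit : ∀ h : ℕ → ℝ, ∑ i ∈ Finset.range n, h i =
          h k + (h (k+1) + ∑ i ∈ ((Finset.range n).erase k).erase (k+1), h i) := by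
        intro h
        rw [← Finset.add_sum_erase _ h hkmem, ← Finset.add_sum_erase _ h hk1mem]
      have hrest : ∀ i ∈ ((Finset.range n).erase k).erase (k+1), g i = f i := by
        intro i hi
        rw [Finset.mem_erase, Finset.mem_erase] at hi
        obtain ⟨hi1, hi2, _⟩ := hi
        rw [hg, hf]
        simp only
        rw [hb', Function.update_of_ne (by omega : i + 1 ≠ k + 1),
          Function.update_of_ne (by omega : i ≠ k + 1)]
      have hFb : F b = ∑ i ∈ Finset.range n, f i := rfl
      have hFb' : F b' = ∑ i ∈ Finset.range n, g i := rfl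
      rw [hFb, hFb', hsplit f, hsplit g, Finset.sum_congr rfl hrest]
      have hgk : g k = ‖(2⁻¹:ℝ) • (e bb - e a)‖ ^ 2 := by
        rw [hg]
        simp only
        rw [hb', Function.update_self, Function.update_of_ne (by omega : k ≠ k + 1)]
        congr 2
        rw [hm, map_smul, map_add]
        module
      have hgk1 : g (k+1) = ‖(2⁻¹:ℝ) • (e bb - e a)‖ ^ 2 := by
        rw [hg]
        simp only
        rw [hb', Function.update_self, Function.update_of_ne (by omega : k + 1 + 1 ≠ k + 1)]
        congr 2
        rw [hm, map_smul, map_add]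
        module
      have hfk : f k = ‖e p - e a‖ ^ 2 := rfl
      have hfk1 : f (k+1) = ‖e bb - e p‖ ^ 2 := rfl
      -- parallelogram
      have hne' : (2:ℝ) • e p - (e a + e bb) ≠ 0 := by
        intro hcon
        rw [sub_eq_zero] at hcon
        apply hne
        apply e.injective
        rw [hm, map_smul, map_add, ← hcon]
        module
      have hkey := par_ineq (A := e a) (B := e bb) (P := e p) hne'
      rw [hgk, hgk1, hfk, hfk1]
      linarith [hkey]
    exact absurd (hbmin hb'A) (not_le.mpr hlt)
  -- arithmetic progression
  have hnR : ((n:ℝ)) ≠ 0 := Nat.cast_ne_zero.mpr (by omega)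
  have hd : ∀ j, j < n → b (j + 1) - b j = b 1 - b 0 := by
    intro j
    induction j with
    | zero => intro _; rfl
    | succ j ih =>
      intro hj
      have h2 : b (j + 2) - b (j + 1) = b (j + 1) - b j := by
        rw [hmid j (by omega)]
        module
      rw [show j + 1 + 1 = j + 2 from rfl, h2]
      exact ih (by omega)
  have hsum : (n : ℝ) • (b 1 - b 0) = y - x := by
    have ht := Finset.sum_range_sub b n
    rw [hbtail n le_rfl, hb0] at ht
    rw [← ht]
    rw [Finset.sum_congr rfl (fun i hi => hd i (Finset.mem_range.mp hi))]
    rw [Finset.sum_const, Finset.card_range, ← Nat.cast_smul_eq_nsmul ℝ]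
  have hd0 : b 1 - b 0 = (n : ℝ)⁻¹ • (y - x) := by
    rw [← hsum, smul_smul, inv_mul_cancel₀ hnR, one_smul]
  have hform : ∀ i ≤ n, b i = x + ((i : ℝ) / n) • (y - x) := by
    intro i
    induction i with
    | zero => intro _; simp [hb0]
    | succ i ih =>
      intro hi
      have hbi := ih (by omega)
      have : b (i + 1) = b i + (b 1 - b 0) := by
        have := hd i (by omega)
        rw [← this]; abel
      rw [this, hbi, hd0]
      rw [add_assoc, ← add_smul]
      congr 2
      push_cast
      field_simp
  intro i hi
  rw [← hform i hi]
  exact (hbK i).1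

/-- Tietze–Nakajima: a closed, connected, locally convex subset of a
finite-dimensional real vector space is convex. -/
theorem tietze_nakajima {V : Type*} [NormedAddCommGroup V] [NormedSpace ℝ V]
    [FiniteDimensional ℝ V] (S : Set V) (hclosed : IsClosed S) (hconn : IsConnected S)
    (hloc : ∀ x ∈ S, ∃ U ∈ nhds x, Convex ℝ (S ∩ U)) :
    Convex ℝ S := by
  rw [convex_iff_segment_subset]
  intro x hx y hy
  obtain ⟨R, hR⟩ := chain_connected hconn hloc hx hy
  obtain ⟨ε, hε, hstar⟩ := uniform_conv hclosed hloc R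
  obtain ⟨N, c, h0, hN, hmem, hstep⟩ := hR ε hε
  have key : ∀ n : ℕ, N ≤ n → 0 < n → ∀ i ≤ n, x + ((i : ℝ) / n) • (y - x) ∈ S := by
    intro n hNn hn
    have hcn' : ∀ i, n ≤ i → c (min i N) = y := by
      intro i hi
      rw [min_eq_right (le_trans hNn hi), hN]
    apply equally_spaced hclosed hε hstar hn (c := fun i => c (min i N))
    · simpa using h0
    · exact hcn'
    · intro i
      have := hmem (min i N) (min_le_right _ _)
      exact ⟨this.1, by simpa [Metric.mem_closedBall, dist_zero_right] using this.2⟩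
    · intro i _
      rcases lt_or_ge i N with h | h
      · have e1 : min i N = i := min_eq_left h.le
        have e2 : min (i + 1) N = i + 1 := min_eq_left h
        rw [e1, e2]
        exact hstep i h
      · have e1 : min i N = N := min_eq_right h
        have e2 : min (i + 1) N = N := min_eq_right (le_trans h (Nat.le_succ i))
        rw [e1, e2]
        simpa using hε.le
  intro z hz
  rw [segment_eq_image'] at hz
  obtain ⟨t, ⟨ht0, ht1⟩, rfl⟩ := hz
  have hratio : Tendsto (fun n : ℕ => (⌊t * n⌋₊ : ℝ) / n) atTop (nhds t) := by
    have hlow : Tendsto (fun n : ℕ => t - 1 / (n:ℝ)) atTop (nhds t) := by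
      have := tendsto_one_div_atTop_nhds_zero_nat (𝕜 := ℝ)
      have h2 := (tendsto_const_nhds (x := t) (f := atTop (α := ℕ))).sub this
      simpa using h2
    apply tendsto_of_tendsto_of_tendsto_of_le_of_le' hlow tendsto_const_nhds
    · filter_upwards [eventually_ge_atTop 1] with n hn
      have hnp : (0:ℝ) < n := by exact_mod_cast hn
      rw [sub_le_iff_le_add, ← add_div, le_div_iff₀ hnp]
      have h2 : t * n - 1 < (⌊t * n⌋₊ : ℝ) := Nat.sub_one_lt_floor (t * n)
      nlinarith
    · filter_upwards [eventually_ge_atTop 1] with n hn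
      have hnp : (0:ℝ) < n := by exact_mod_cast hn
      rw [div_le_iff₀ hnp]
      have h1 : (⌊t * n⌋₊ : ℝ) ≤ t * n := Nat.floor_le (by positivity)
      nlinarith
  have hcont : Continuous (fun r : ℝ => x + r • (y - x)) :=
    continuous_const.add (continuous_id.smul continuous_const)
  have htend : Tendsto (fun n : ℕ => x + ((⌊t * n⌋₊ : ℝ) / n) • (y - x)) atTop
      (nhds (x + t • (y - x))) := (hcont.tendsto t).comp hratio
  apply hclosed.mem_of_tendsto htend
  filter_upwards [eventually_ge_atTop (N + 1)] with n hn
  apply key n (by omega) (by omega)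
  have h1 : t * n ≤ (n:ℝ) := by
    have hnn : (0:ℝ) ≤ n := Nat.cast_nonneg n
    nlinarith
  exact Nat.floor_le_of_le h1
end

section
/- Let V be a real vector space, Λ an additive subgroup of V, and q : V → V/Λ the quotient homomorphism. Let d ≥ 1, let ε¹,…,ε^d be the standard basis of ℤ^d, and let c : ℤ^d × ℤ^d → V be a biadditive antisymmetric map with c(ζ,ζ') ∈ Λ for all ζ, ζ' ∈ ℤ^d. Suppose τ : ℤ^d → V/Λ satisfies τ(ζ') + τ(ζ) = τ(ζ + ζ') + q(c(ζ',ζ)/2) for all ζ, ζ' ∈ ℤ^d. Then for every ζ = (ζ₁,…,ζ_d) ∈ ℤ^d one has τ(ζ) = q( (1/2) · Σ_{1 ≤ l < l' ≤ d} ζ_l ζ_{l'} c(ε^l, ε^{l'}) ) + Σ_{l=1}^{d} ζ_l · τ(ε^l), where ζ_l · τ(ε^l) denotes the ζ_l-fold sum in the abelian group V/Λ. -/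
/-- Helper: merging five double sums into one. -/
lemma holonomy_sum5_helper {M : Type*} [AddCommGroup M] {n : ℕ}
    (f g h k m w : Fin n → Fin n → M)
    (H : ∀ i j, f i j + g i j + h i j - k i j - m i j = w i j) :
    (∑ i, ∑ j, f i j) + (∑ i, ∑ j, g i j) + (∑ i, ∑ j, h i j)
      - (∑ i, ∑ j, k i j) - (∑ i, ∑ j, m i j) = ∑ i, ∑ j, w i j := by
  rw [← Finset.sum_add_distrib, ← Finset.sum_add_distrib, ← Finset.sum_sub_distrib,
    ← Finset.sum_sub_distrib]
  refine Finset.sum_congr rfl fun i _ => ?_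
  rw [← Finset.sum_add_distrib, ← Finset.sum_add_distrib, ← Finset.sum_sub_distrib,
    ← Finset.sum_sub_distrib]
  exact Finset.sum_congr rfl fun j _ => H i j

/-- if `τ : ℤ^d → V/Λ` satisfies the holonomy relation
`τ(ζ') + τ(ζ) = τ(ζ + ζ') + q(c(ζ',ζ)/2)` for a biadditive antisymmetric `c` with values in
`Λ`, then `τ(ζ) = q((1/2)·Σ_{l<l'} ζ_l ζ_{l'} c(ε^l,ε^{l'})) + Σ_l ζ_l·τ(ε^l)`. -/
theorem holonomy_formula {V : Type*} [AddCommGroup V] [Module ℝ V] (Λ : AddSubgroup V)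
    (d : ℕ) (hd : 1 ≤ d)
    (c : (Fin d → ℤ) → (Fin d → ℤ) → V)
    (hc1 : ∀ x y z : Fin d → ℤ, c (x + y) z = c x z + c y z)
    (hc2 : ∀ x y z : Fin d → ℤ, c x (y + z) = c x y + c x z)
    (hanti : ∀ x y : Fin d → ℤ, c x y = - c y x)
    (hΛ : ∀ x y : Fin d → ℤ, c x y ∈ Λ)
    (τ : (Fin d → ℤ) → V ⧸ Λ)
    (hτ : ∀ ζ ζ' : Fin d → ℤ,
      τ ζ' + τ ζ = τ (ζ + ζ') + QuotientAddGroup.mk' Λ ((2⁻¹ : ℝ) • c ζ' ζ)) :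
    ∀ ζ : Fin d → ℤ,
      τ ζ = QuotientAddGroup.mk' Λ ((2⁻¹ : ℝ) •
          ∑ l : Fin d, ∑ l' : Fin d,
            (if l < l' then (ζ l * ζ l') • c (Pi.single l 1) (Pi.single l' 1) else 0))
        + ∑ l : Fin d, ζ l • τ (Pi.single l 1) := by
  classical
  set q : V →+ V ⧸ Λ := QuotientAddGroup.mk' Λ with hqdef
  set ε : Fin d → (Fin d → ℤ) := fun l => Pi.single l 1 with hεdef
  set Q : (Fin d → ℤ) → V := fun x => ∑ l : Fin d, ∑ l' : Fin d,
      (if l < l' then (x l * x l') • c (ε l) (ε l') else 0) with hQdef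
  -- basic facts about c
  have hc0l : ∀ y, c 0 y = 0 := by
    intro y
    have h := hc1 0 0 y
    rw [add_zero] at h
    exact (left_eq_add.mp h)
  have hc0r : ∀ x, c x 0 = 0 := by
    intro x
    have h := hc2 x 0 0
    rw [add_zero] at h
    exact (left_eq_add.mp h)
  have hcself : ∀ x, c x x = 0 := by
    intro x
    have h2 : c x x + c x x = 0 := eq_neg_iff_add_eq_zero.mp (hanti x x)
    have h3 : c x x = (2⁻¹ : ℝ) • ((2 : ℝ) • c x x) := by
      rw [smul_smul]; norm_num
    rw [h3, two_smul, h2, smul_zero]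
  have hτ0 : τ 0 = 0 := by
    have h := hτ 0 0
    rw [add_zero, hc0l, smul_zero, map_zero, add_zero] at h
    exact add_eq_left.mp h
  -- bundled additivity of c
  let cL : (Fin d → ℤ) → (Fin d → ℤ) →+ V := fun y =>
    { toFun := fun x => c x y, map_zero' := hc0l y, map_add' := fun a b => hc1 a b y }
  let cR : (Fin d → ℤ) → (Fin d → ℤ) →+ V := fun x =>
    { toFun := fun y => c x y, map_zero' := hc0r x, map_add' := fun a b => hc2 x a b }
  -- decomposition of a vector in the standard basis
  have hsingle : ∀ (l : Fin d) (n : ℤ), n • ε l = Pi.single l n := by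
    intro l n
    funext j
    rcases eq_or_ne j l with hj | hj <;>
      simp [hεdef, Pi.single_apply, hj]
  have hdecomp : ∀ x : Fin d → ℤ, ∑ l, x l • ε l = x := by
    intro x
    calc ∑ l, x l • ε l = ∑ l, Pi.single l (x l) :=
          Finset.sum_congr rfl fun l _ => hsingle l (x l)
      _ = x := Finset.univ_sum_single x
  -- bilinear expansion of c
  have hexpand : ∀ x y : Fin d → ℤ,
      c x y = ∑ l, ∑ l', (x l * y l') • c (ε l) (ε l') := by
    intro x y
    have h1 : c x y = ∑ l, x l • c (ε l) y := by
      conv_lhs => rw [← hdecomp x]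
      rw [show c (∑ l, x l • ε l) y = cL y (∑ l, x l • ε l) from rfl, map_sum]
      exact Finset.sum_congr rfl fun l _ => map_zsmul (cL y) (x l) (ε l)
    have h2 : ∀ l : Fin d, c (ε l) y = ∑ l', y l' • c (ε l) (ε l') := by
      intro l
      conv_lhs => rw [← hdecomp y]
      rw [show c (ε l) (∑ l', y l' • ε l') = cR (ε l) (∑ l', y l' • ε l') from rfl, map_sum]
      exact Finset.sum_congr rfl fun l' _ => map_zsmul (cR (ε l)) (y l') (ε l')
    rw [h1]
    refine Finset.sum_congr rfl fun l _ => ?_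
    rw [h2 l, Finset.smul_sum]
    exact Finset.sum_congr rfl fun l' _ => by rw [smul_smul]
  -- splitting of the full double sum
  have hA : ∀ x y : Fin d → ℤ, ∀ l l' : Fin d,
      (y l * x l') • c (ε l) (ε l') =
        (if l < l' then (y l * x l') • c (ε l) (ε l') else 0) +
        (if l' < l then (y l * x l') • c (ε l) (ε l') else 0) := by
    intro x y l l'
    rcases lt_trichotomy l l' with h | h | h
    · simp [h, h.asymm]
    · subst h
      simp [hcself (ε l)]
    · simp [h, h.asymm]
  have hcyx : ∀ x y : Fin d → ℤ, c y x =
      (∑ l, ∑ l', if l < l' then (y l * x l') • c (ε l) (ε l') else 0) +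
      (∑ l, ∑ l', if l' < l then (y l * x l') • c (ε l) (ε l') else 0) := by
    intro x y
    rw [hexpand y x, ← Finset.sum_add_distrib]
    refine Finset.sum_congr rfl fun l _ => ?_
    rw [← Finset.sum_add_distrib]
    exact Finset.sum_congr rfl fun l' _ => hA x y l l'
  have hS2 : ∀ x y : Fin d → ℤ,
      (∑ l, ∑ l', if l' < l then (y l * x l') • c (ε l) (ε l') else 0) =
      ∑ l, ∑ l', if l < l' then (-(y l' * x l)) • c (ε l) (ε l') else 0 := by
    intro x y
    rw [Finset.sum_comm]
    refine Finset.sum_congr rfl fun a _ => Finset.sum_congr rfl fun b _ => ?_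
    split_ifs with h
    · rw [hanti (ε b) (ε a), smul_neg, ← neg_smul]
    · rfl
  -- the key quadratic identity
  have key : ∀ x y : Fin d → ℤ, c y x + Q (x + y) - Q x - Q y =
      (2 : ℤ) • ∑ l, ∑ l', (if l < l' then (y l * x l') • c (ε l) (ε l') else 0) := by
    intro x y
    have hterm : ∀ i j : Fin d,
        (if i < j then (y i * x j) • c (ε i) (ε j) else 0) +
          (if i < j then (-(y j * x i)) • c (ε i) (ε j) else 0) +
          (if i < j then ((x + y) i * (x + y) j) • c (ε i) (ε j) else 0) -
          (if i < j then (x i * x j) • c (ε i) (ε j) else 0) -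
          (if i < j then (y i * y j) • c (ε i) (ε j) else 0) =
        (2 : ℤ) • (if i < j then (y i * x j) • c (ε i) (ε j) else 0) := by
      intro i j
      split_ifs with h
      · simp only [Pi.add_apply, smul_smul, ← add_smul, ← sub_smul]
        congr 1
        ring
      · simp
    have hmain := holonomy_sum5_helper
      (fun l l' => if l < l' then (y l * x l') • c (ε l) (ε l') else 0)
      (fun l l' => if l < l' then (-(y l' * x l)) • c (ε l) (ε l') else 0)
      (fun l l' => if l < l' then ((x + y) l * (x + y) l') • c (ε l) (ε l') else 0)
      (fun l l' => if l < l' then (x l * x l') • c (ε l) (ε l') else 0)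
      (fun l l' => if l < l' then (y l * y l') • c (ε l) (ε l') else 0)
      (fun l l' => (2 : ℤ) • (if l < l' then (y l * x l') • c (ε l) (ε l') else 0))
      hterm
    beta_reduce at hmain
    simp only [hQdef]
    rw [hcyx x y, hS2 x y, hmain, Finset.smul_sum]
    exact Finset.sum_congr rfl fun l _ => (Finset.smul_sum).symm
  -- membership in Λ
  have hW : ∀ x y : Fin d → ℤ,
      (∑ l, ∑ l', (if l < l' then (y l * x l') • c (ε l) (ε l') else 0)) ∈ Λ := by
    intro x y
    refine sum_mem fun l _ => sum_mem fun l' _ => ?_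
    split_ifs with h
    · exact zsmul_mem (hΛ _ _) _
    · exact Λ.zero_mem
  -- additivity of z ↦ τ z - q((1/2) Q z)
  have hg : ∀ x y : Fin d → ℤ,
      τ (x + y) - q ((2⁻¹ : ℝ) • Q (x + y)) =
        (τ x - q ((2⁻¹ : ℝ) • Q x)) + (τ y - q ((2⁻¹ : ℝ) • Q y)) := by
    intro x y
    have hzero : q ((2⁻¹ : ℝ) • (c y x + Q (x + y) - Q x - Q y)) = 0 := by
      rw [key x y, ← Int.cast_smul_eq_zsmul ℝ, smul_smul]
      have hs : (2⁻¹ * ((2 : ℤ) : ℝ)) = 1 := by norm_num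
      rw [hs, one_smul]
      exact (QuotientAddGroup.eq_zero_iff _).mpr (hW x y)
    have hA' : τ (x + y) = τ y + τ x - q ((2⁻¹ : ℝ) • c y x) := by
      rw [hτ x y]; abel
    have hc' : q ((2⁻¹ : ℝ) • c y x) =
        q ((2⁻¹ : ℝ) • Q x) + q ((2⁻¹ : ℝ) • Q y) - q ((2⁻¹ : ℝ) • Q (x + y)) := by
      have h0 := hzero
      rw [show c y x + Q (x + y) - Q x - Q y
            = c y x - (Q x + Q y - Q (x + y)) by abel] at h0
      rw [smul_sub, map_sub, sub_eq_zero] at h0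
      rw [h0, smul_sub, smul_add, map_sub, map_add]
    rw [hA', hc']
    abel
  -- the bundled additive map
  let g : (Fin d → ℤ) →+ V ⧸ Λ :=
    { toFun := fun z => τ z - q ((2⁻¹ : ℝ) • Q z)
      map_zero' := by
        have hQ0 : Q 0 = 0 := by
          simp only [hQdef]
          simp
        show τ 0 - q ((2⁻¹ : ℝ) • Q 0) = 0
        rw [hτ0, hQ0, smul_zero, map_zero, sub_zero]
      map_add' := fun a b => hg a b }
  have hgdef : ∀ z, g z = τ z - q ((2⁻¹ : ℝ) • Q z) := fun _ => rfl
  have hQε : ∀ m : Fin d, Q (ε m) = 0 := by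
    intro m
    simp only [hQdef]
    refine Finset.sum_eq_zero fun l _ => Finset.sum_eq_zero fun l' _ => ?_
    split_ifs with h
    · rcases ne_or_eq l m with hl | hl
      · simp [hεdef, Pi.single_apply, hl]
      · have hl' : l' ≠ m := by rw [← hl]; exact h.ne'
        simp [hεdef, Pi.single_apply, hl']
    · rfl
  intro ζ
  have h1 : g ζ = ∑ l, ζ l • g (ε l) := by
    conv_lhs => rw [← hdecomp ζ]
    rw [map_sum]
    exact Finset.sum_congr rfl fun l _ => map_zsmul g (ζ l) (ε l)
  have h2 : ∀ l, g (ε l) = τ (ε l) := by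
    intro l
    rw [hgdef, hQε l, smul_zero, map_zero, sub_zero]
  have hgζ : τ ζ - q ((2⁻¹ : ℝ) • Q ζ) = ∑ l, ζ l • τ (ε l) := by
    rw [← hgdef, h1]
    exact Finset.sum_congr rfl fun l _ => by rw [h2 l]
  have goal' : τ ζ = q ((2⁻¹ : ℝ) • Q ζ) + ∑ l, ζ l • τ (ε l) := by
    rw [← hgζ]; abel
  rw [goal']
end

section
/- Let V be a real vector space, Λ an additive subgroup of V, and q : V → V/Λ the quotient homomorphism. Let d ≥ 1 and let c : ℤ^d × ℤ^d → V be a biadditive antisymmetric map with c(ζ,ζ') ∈ Λ for all ζ, ζ' ∈ ℤ^d. Let Hom_c(ℤ^d, V/Λ) denote the set of all maps τ : ℤ^d → V/Λ satisfying τ(ζ') + τ(ζ) = τ(ζ + ζ') + q(c(ζ',ζ)/2) for all ζ, ζ' ∈ ℤ^d. Then Hom_c(ℤ^d, V/Λ) is nonempty, and for every τ₀ ∈ Hom_c(ℤ^d, V/Λ) the map h ↦ τ₀ + h (pointwise addition) is a bijection from the group Hom(ℤ^d, V/Λ) of group homomorphisms onto Hom_c(ℤ^d, V/Λ); equivalently,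 Hom(ℤ^d, V/Λ) acts freely and transitively on Hom_c(ℤ^d, V/Λ) by pointwise addition. -/
/-- The set `Hom_c(ℤ^d, V/Λ)` of maps `τ : ℤ^d → V/Λ` satisfying the holonomy relation
`τ(ζ') + τ(ζ) = τ(ζ + ζ') + q(c(ζ',ζ)/2)`. -/
def HomC {V : Type*} [AddCommGroup V] [Module ℝ V] (Λ : AddSubgroup V) (d : ℕ)
    (c : (Fin d → ℤ) → (Fin d → ℤ) → V) : Set ((Fin d → ℤ) → V ⧸ Λ) :=
  {τ | ∀ ζ ζ' : Fin d → ℤ,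
    τ ζ' + τ ζ = τ (ζ + ζ') + QuotientAddGroup.mk' Λ ((2⁻¹ : ℝ) • c ζ' ζ)}

private lemma swap_sum_tri {V : Type*} [AddCommMonoid V] {d : ℕ} (g : Fin d → Fin d → V) :
    ∑ i, ∑ j ∈ Finset.Iio i, g i j = ∑ i, ∑ j ∈ Finset.Ioi i, g j i := by
  rw [Finset.sum_sigma', Finset.sum_sigma']
  refine Finset.sum_nbij' (fun x ↦ ⟨x.2, x.1⟩) (fun x ↦ ⟨x.2, x.1⟩) ?_ ?_ (fun _ _ ↦ rfl)
    (fun _ _ ↦ rfl) (fun _ _ ↦ rfl) <;>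
  · rintro ⟨a, b⟩ hab
    simp only [Finset.mem_sigma, Finset.mem_univ, Finset.mem_Iio, Finset.mem_Ioi, true_and] at *
    exact hab

private lemma split_univ_sum {V : Type*} [AddCommMonoid V] {d : ℕ} (g : Fin d → Fin d → V) :
    ∑ i, ∑ j, g i j = (∑ i, g i i) + ∑ i, ∑ j ∈ Finset.Ioi i, (g i j + g j i) := by
  have h1 : ∀ i : Fin d, ∑ j, g i j
      = g i i + (∑ j ∈ Finset.Iio i, g i j + ∑ j ∈ Finset.Ioi i, g i j) := by
    intro i
    have hd : Disjoint (Finset.Iio i) (Finset.Ioi i) :=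
      Finset.disjoint_left.mpr fun j hj hj' =>
        absurd (Finset.mem_Ioi.mp hj') (not_lt.mpr (Finset.mem_Iio.mp hj).le)
    have hu : Finset.Iio i ∪ Finset.Ioi i = Finset.univ.erase i := by
      ext j
      simp [lt_or_lt_iff_ne]
    rw [← Finset.sum_union hd, hu, Finset.add_sum_erase _ _ (Finset.mem_univ i)]
  calc ∑ i, ∑ j, g i j
      = ∑ i, (g i i + (∑ j ∈ Finset.Iio i, g i j + ∑ j ∈ Finset.Ioi i, g i j)) := by
        exact Finset.sum_congr rfl fun i _ => h1 i
    _ = (∑ i, g i i) + ((∑ i, ∑ j ∈ Finset.Iio i, g i j) + ∑ i, ∑ j ∈ Finset.Ioi i, g i j) := by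
        rw [Finset.sum_add_distrib, Finset.sum_add_distrib]
    _ = (∑ i, g i i) + ((∑ i, ∑ j ∈ Finset.Ioi i, g j i) + ∑ i, ∑ j ∈ Finset.Ioi i, g i j) := by
        rw [swap_sum_tri]
    _ = (∑ i, g i i) + ∑ i, ∑ j ∈ Finset.Ioi i, (g i j + g j i) := by
        rw [← Finset.sum_add_distrib]
        congr 1
        refine Finset.sum_congr rfl fun i _ => ?_
        rw [← Finset.sum_add_distrib]
        exact Finset.sum_congr rfl fun j _ => add_comm _ _

/-- `Hom_c(ℤ^d, V/Λ)` is nonempty and the group `Hom(ℤ^d, V/Λ)` of group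
homomorphisms acts freely and transitively on it by pointwise addition: for every
`τ₀ ∈ Hom_c(ℤ^d, V/Λ)`, the map `h ↦ τ₀ + h` is a bijection from `Hom(ℤ^d, V/Λ)` onto
`Hom_c(ℤ^d, V/Λ)`. -/
theorem homC_nonempty_torsor {V : Type*} [AddCommGroup V] [Module ℝ V] (Λ : AddSubgroup V)
    (d : ℕ) (hd : 1 ≤ d)
    (c : (Fin d → ℤ) → (Fin d → ℤ) → V)
    (hc1 : ∀ x y z : Fin d → ℤ, c (x + y) z = c x z + c y z)
    (hc2 : ∀ x y z : Fin d → ℤ, c x (y + z) = c x y + c x z)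
    (hanti : ∀ x y : Fin d → ℤ, c x y = - c y x)
    (hΛ : ∀ x y : Fin d → ℤ, c x y ∈ Λ) :
    (HomC Λ d c).Nonempty ∧
    ∀ τ₀ ∈ HomC Λ d c,
      (∀ h : (Fin d → ℤ) →+ V ⧸ Λ, (fun ζ => τ₀ ζ + h ζ) ∈ HomC Λ d c) ∧
      (∀ τ ∈ HomC Λ d c, ∃! h : (Fin d → ℤ) →+ V ⧸ Λ, ∀ ζ, τ ζ = τ₀ ζ + h ζ) := by
  -- the quotient map
  set q : V →+ V ⧸ Λ := QuotientAddGroup.mk' Λ with hq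
  -- `c` as a bundled biadditive map
  set C : (Fin d → ℤ) →+ (Fin d → ℤ) →+ V :=
    AddMonoidHom.mk' (fun x => AddMonoidHom.mk' (fun y => c x y) (fun a b => hc2 x a b))
      (fun a b => AddMonoidHom.ext fun y => hc1 a b y) with hC
  have hCapp : ∀ x y, C x y = c x y := fun _ _ => rfl
  -- self-pairing vanishes
  have hself : ∀ x, c x x = 0 := by
    intro x
    have h := hanti x x
    have h2 : (2 : ℝ) • c x x = 0 := by
      rw [two_smul]
      nth_rewrite 1 [h]
      abel
    have h3 := congrArg (fun v => (2⁻¹ : ℝ) • v) h2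
    simp only [smul_smul, smul_zero] at h3
    norm_num at h3
    exact h3
  -- basis vectors
  set e : Fin d → (Fin d → ℤ) := fun i => Pi.single i 1 with he
  set cE : Fin d → Fin d → V := fun i j => c (e i) (e j) with hcE
  have heE : ∀ x : Fin d → ℤ, x = ∑ i, (x i) • e i := by
    intro x
    funext k
    simp [he, Finset.sum_apply, Pi.single_apply]
  -- expansion of c in the basis
  have hexp : ∀ x y : Fin d → ℤ, c x y = ∑ i, ∑ j, (x i * y j) • cE i j := by
    intro x y
    rw [← hCapp]
    conv_lhs => rw [heE x]
    rw [map_sum, AddMonoidHom.finset_sum_apply]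
    refine Finset.sum_congr rfl fun i _ => ?_
    rw [map_zsmul, AddMonoidHom.smul_apply]
    conv_lhs => rw [heE y]
    rw [map_sum, Finset.smul_sum]
    refine Finset.sum_congr rfl fun j _ => ?_
    rw [map_zsmul, smul_smul, hCapp]
  -- triangular expansion of c
  have htri : ∀ x y : Fin d → ℤ,
      c x y = ∑ i, ∑ j ∈ Finset.Ioi i, (x i * y j - x j * y i) • cE i j := by
    intro x y
    rw [hexp x y, split_univ_sum]
    have hdiag : (∑ i, (x i * y i) • cE i i) = 0 := by
      refine Finset.sum_eq_zero fun i _ => ?_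
      rw [hcE]
      simp [hself]
    rw [hdiag, zero_add]
    refine Finset.sum_congr rfl fun i _ => Finset.sum_congr rfl fun j _ => ?_
    have : cE j i = - cE i j := by rw [hcE]; exact hanti _ _
    rw [this, smul_neg, ← sub_eq_add_neg, sub_smul]
  -- the quadratic correction
  set F : (Fin d → ℤ) → V := fun ζ => ∑ i, ∑ j ∈ Finset.Ioi i, (ζ i * ζ j) • cE i j with hF
  set f : (Fin d → ℤ) → V := fun ζ => (-(2⁻¹ : ℝ)) • F ζ with hf
  -- the candidate basepoint
  set τc : (Fin d → ℤ) → V ⧸ Λ := fun ζ => q (f ζ) with hτc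
  have hkey : ∀ ζ ζ' : Fin d → ℤ,
      F (ζ + ζ') - F ζ - F ζ' - c ζ' ζ
        = (2 : ℤ) • ∑ i, ∑ j ∈ Finset.Ioi i, (ζ i * ζ' j) • cE i j := by
    intro ζ ζ'
    rw [htri ζ' ζ, hF]
    simp only [Pi.add_apply, Finset.smul_sum]
    rw [← Finset.sum_sub_distrib, ← Finset.sum_sub_distrib, ← Finset.sum_sub_distrib]
    refine Finset.sum_congr rfl fun i _ => ?_
    rw [← Finset.sum_sub_distrib, ← Finset.sum_sub_distrib, ← Finset.sum_sub_distrib]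
    refine Finset.sum_congr rfl fun j _ => ?_
    rw [smul_smul, ← sub_smul, ← sub_smul, ← sub_smul]
    congr 1
    ring
  have hτcmem : τc ∈ HomC Λ d c := by
    intro ζ ζ'
    have hmem : f ζ' + f ζ - (f (ζ + ζ') + (2⁻¹ : ℝ) • c ζ' ζ) ∈ Λ := by
      have heq : f ζ' + f ζ - (f (ζ + ζ') + (2⁻¹ : ℝ) • c ζ' ζ)
          = (2⁻¹ : ℝ) • (F (ζ + ζ') - F ζ - F ζ' - c ζ' ζ) := by
        rw [hf]
        simp only [neg_smul, smul_sub]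
        abel
      have hS : (∑ i, ∑ j ∈ Finset.Ioi i, (ζ i * ζ' j) • cE i j) ∈ Λ := by
        refine AddSubgroup.sum_mem Λ fun i _ => AddSubgroup.sum_mem Λ fun j _ => ?_
        exact AddSubgroup.zsmul_mem Λ (hΛ _ _) _
      rw [heq, hkey ζ ζ']
      rw [← Int.cast_smul_eq_zsmul ℝ, smul_smul]
      norm_num
      exact hS
    show q (f ζ') + q (f ζ) = q (f (ζ + ζ')) + q ((2⁻¹ : ℝ) • c ζ' ζ)
    rw [← map_add, ← map_add]
    rw [hq, QuotientAddGroup.mk'_eq_mk']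
    exact ⟨-(f ζ' + f ζ - (f (ζ + ζ') + (2⁻¹ : ℝ) • c ζ' ζ)), Λ.neg_mem hmem, by abel⟩
  refine ⟨⟨τc, hτcmem⟩, ?_⟩
  intro τ₀ hτ₀
  constructor
  · intro h ζ ζ'
    simp only
    rw [show τ₀ ζ' + h ζ' + (τ₀ ζ + h ζ) = (τ₀ ζ' + τ₀ ζ) + (h ζ' + h ζ) by abel,
      hτ₀ ζ ζ', map_add]
    abel
  · intro τ hτ
    -- c 0 y = 0 hence τ 0 = 0 for τ ∈ HomC
    have hc0 : ∀ y, c y (0 : Fin d → ℤ) = 0 := by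
      intro y
      have := hc2 y 0 0
      simpa using this.symm
    have hzero : ∀ σ, σ ∈ HomC Λ d c → σ (0 : Fin d → ℤ) = 0 := by
      intro σ hσ
      have h := hσ 0 0
      simp only [add_zero, hc0, smul_zero, map_zero] at h
      have h' : σ 0 + σ 0 = σ 0 + 0 := by rw [add_zero]; exact h
      exact add_left_cancel h'
    have hadd : ∀ ζ ζ' : Fin d → ℤ,
        (τ (ζ + ζ') - τ₀ (ζ + ζ')) = (τ ζ - τ₀ ζ) + (τ ζ' - τ₀ ζ') := by
      intro ζ ζ'
      have h1 := hτ ζ ζ'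
      have h2 := hτ₀ ζ ζ'
      have h3 : τ (ζ + ζ') + QuotientAddGroup.mk' Λ ((2⁻¹ : ℝ) • c ζ' ζ)
          - (τ₀ (ζ + ζ') + QuotientAddGroup.mk' Λ ((2⁻¹ : ℝ) • c ζ' ζ))
          = τ (ζ + ζ') - τ₀ (ζ + ζ') := by abel
      rw [← h3, ← h1, ← h2]
      abel
    refine ⟨AddMonoidHom.mk' (fun ζ => τ ζ - τ₀ ζ) (fun ζ ζ' => hadd ζ ζ'), ?_, ?_⟩
    · intro ζ
      show τ ζ = τ₀ ζ + (τ ζ - τ₀ ζ)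
      abel
    · intro h' hh'
      refine AddMonoidHom.ext fun ζ => ?_
      show h' ζ = τ ζ - τ₀ ζ
      rw [hh' ζ]
      abel
end
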